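/- Let X be a metric space, Z ⊆ X, and let x, y ∈ X satisfy d(x,y) ≤ d(x,Z). If w lies on a geodesic segment from x to y, then d(w,y) ≤ d(w,Z); consequently, for any y' ∈ π_Z(y) and any subset Z' ⊆ Z, d(y',Z') ≤ 4 d(w,Z'). -/
import Mathlib


open Metric Set

section Defs

variable {X : Type*} [MetricSpace X]

/-- A unit-speed geodesic segment from `p` to `q`, parameterized on `[0, dist p q]`. -/
def IsGeodesicFrom (γ : ℝ → X) (p q : X) : Prop :=
  γ 0 = p ∧ γ (dist p q) = q ∧
    ∀ s ∈ Set.Icc (0 : ℝ) (dist p q), ∀ t ∈ Set.Icc (0 : ℝ) (dist p q),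
      dist (γ s) (γ t) = |s - t|

/-- A geodesic metric space: every pair of points is joined by a geodesic segment. -/
def IsGeodesicSpace (X : Type*) [MetricSpace X] : Prop :=
  ∀ p q : X, ∃ γ : ℝ → X, IsGeodesicFrom γ p q

/-- CAT(0): a geodesic space in which every geodesic triangle satisfies the comparison
inequality; equivalently (and as formalized here), for every geodesic `γ` from `p` to `q`
and every point `x`, the distance from `x` to a point of `γ` is bounded by the distance
between the corresponding points of a comparison triangle in the Euclidean plane:
`d(x, γ t)² ≤ (1 - t/d)·d(x,p)² + (t/d)·d(x,q)² - (t/d)(1 - t/d)·d²` where `d = d(p,q)`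
(written below multiplied through by `d` to avoid division). -/
def IsCAT0Space (X : Type*) [MetricSpace X] : Prop :=
  IsGeodesicSpace X ∧
    ∀ p q : X, ∀ γ : ℝ → X, IsGeodesicFrom γ p q → ∀ x : X,
      ∀ t ∈ Set.Icc (0 : ℝ) (dist p q),
        dist x (γ t) ^ 2 * dist p q ≤
          (dist p q - t) * dist x p ^ 2 + t * dist x q ^ 2 - t * (dist p q - t) * dist p q

/-- The nearest-point projection `π_Z(x) = {z ∈ Z | d(x,z) = d(x,Z)}`. -/
def projSet (Z : Set X) (x : X) : Set X := {z ∈ Z | dist x z = Metric.infDist x Z}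

/-- An `(L,A)`-quasi-geodesic segment defined on `[a,b]`. -/
def IsQuasiGeodesicOn (L A a b : ℝ) (γ : ℝ → X) : Prop :=
  a ≤ b ∧ ∀ s ∈ Set.Icc a b, ∀ t ∈ Set.Icc a b,
    |s - t| / L - A ≤ dist (γ s) (γ t) ∧ dist (γ s) (γ t) ≤ L * |s - t| + A

/-- `Z` is Morse: for all `L ≥ 1`, `A ≥ 0` there is a bound `M = μ(L,A)` on the distance
to `Z` of points on `(L,A)`-quasi-geodesic segments with both endpoints on `Z`. -/
def IsMorse (Z : Set X) : Prop :=
  ∀ L : ℝ, 1 ≤ L → ∀ A : ℝ, 0 ≤ A → ∃ M : ℝ,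
    ∀ a b : ℝ, ∀ γ : ℝ → X, IsQuasiGeodesicOn L A a b γ → γ a ∈ Z → γ b ∈ Z →
      ∀ s ∈ Set.Icc a b, Metric.infDist (γ s) Z ≤ M

/-- `Z` with the open balls of radius `d(z,z')/3` about `z` and `z'` removed. -/
def recRemoved (Z : Set X) (z z' : X) : Set X :=
  Z \ (Metric.ball z (dist z z' / 3) ∪ Metric.ball z' (dist z z' / 3))

/-- `Z` is `ρ`-recurrent: for every `q ≥ 1`, every rectifiable segment `γ` with endpoints
`z, z' ∈ Z` and `len(γ) ≤ q · d(z,z')` comes within distance `ρ(q)` of `Z'`, where `Z'` is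
`Z` with the open balls of radius `d(z,z')/3` about the endpoints removed.  (Distance to
`Z'` is measured by `infEdist`, which is `∞` when `Z'` is empty, matching
`inf ∅ = ∞` in the definition of `ρ`.) -/
def IsRecurrentWith (Z : Set X) (ρ : ℝ → ℝ) : Prop :=
  ∀ q : ℝ, 1 ≤ q → ∀ a b : ℝ, a ≤ b → ∀ γ : ℝ → X,
    ContinuousOn γ (Set.Icc a b) → γ a ∈ Z → γ b ∈ Z →
    eVariationOn γ (Set.Icc a b) ≤ ENNReal.ofReal (q * dist (γ a) (γ b)) →
    ∃ s ∈ Set.Icc a b,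
      EMetric.infEdist (γ s) (recRemoved Z (γ a) (γ b)) ≤ ENNReal.ofReal (ρ q)

/-- `Z` is recurrent: `ρ(q) < ∞` for every `q ≥ 1`, i.e. some real-valued function `ρ`
witnesses recurrence. -/
def IsRecurrent (Z : Set X) : Prop := ∃ ρ : ℝ → ℝ, IsRecurrentWith Z ρ

/-- `Z` is contracting with gauge `σ`: `σ(r)` bounds `diam(π_Z(x) ∪ π_Z(y))` whenever
`d(x,y) ≤ d(x,Z) ≤ r`, and `σ(r)/r → 0` as `r → ∞`. -/
def IsContractingWith (Z : Set X) (σ : ℝ → ℝ) : Prop :=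
  (∀ r : ℝ, 0 ≤ r → ∀ x y : X, dist x y ≤ Metric.infDist x Z → Metric.infDist x Z ≤ r →
      ∀ p ∈ projSet Z x ∪ projSet Z y, ∀ p' ∈ projSet Z x ∪ projSet Z y,
        dist p p' ≤ σ r) ∧
    Filter.Tendsto (fun r => σ r / r) Filter.atTop (nhds 0)

/-- `Z` is contracting: there is a sublinear contraction gauge. -/
def IsContracting (Z : Set X) : Prop := ∃ σ : ℝ → ℝ, IsContractingWith Z σ

/-- `Z` is strongly contracting: a single constant `C ≥ 0` bounds
`diam(π_Z(x) ∪ π_Z(y))` whenever `d(x,y) ≤ d(x,Z)`. -/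
def IsStronglyContracting (Z : Set X) : Prop :=
  ∃ C : ℝ, 0 ≤ C ∧ ∀ x y : X, dist x y ≤ Metric.infDist x Z →
    ∀ p ∈ projSet Z x ∪ projSet Z y, ∀ p' ∈ projSet Z x ∪ projSet Z y, dist p p' ≤ C

/-- `X` is `δ`-hyperbolic: every geodesic triangle is `δ`-thin, i.e. each side lies in the
`δ`-neighborhood of the union of the other two sides. -/
def IsDeltaHyperbolic (X : Type*) [MetricSpace X] (δ : ℝ) : Prop :=
  ∀ x y z : X, ∀ γ₁ γ₂ γ₃ : ℝ → X,
    IsGeodesicFrom γ₁ x y → IsGeodesicFrom γ₂ y z → IsGeodesicFrom γ₃ x z →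
    ∀ t ∈ Set.Icc (0 : ℝ) (dist x y),
      Metric.infDist (γ₁ t)
        (γ₂ '' Set.Icc (0 : ℝ) (dist y z) ∪ γ₃ '' Set.Icc (0 : ℝ) (dist x z)) ≤ δ

/-- `Z` is quasi-convex: every geodesic segment with both endpoints in `Z` lies in the
`C`-neighborhood of `Z`, for some `C ≥ 0`. -/
def IsQuasiConvex (Z : Set X) : Prop :=
  ∃ C : ℝ, 0 ≤ C ∧ ∀ p ∈ Z, ∀ q ∈ Z, ∀ γ : ℝ → X, IsGeodesicFrom γ p q →
    ∀ t ∈ Set.Icc (0 : ℝ) (dist p q), Metric.infDist (γ t) Z ≤ C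

end Defs

/-- If `d(x,y) ≤ d(x,Z)` and `w` lies on a geodesic segment from `x` to `y`, then
`d(w,y) ≤ d(w,Z)`; consequently `d(y',Z') ≤ 4·d(w,Z')` for every `y' ∈ π_Z(y)` and every
nonempty subset `Z' ⊆ Z`. -/
theorem point_on_geodesic_close_to_far_end
    {X : Type*} [MetricSpace X] (Z : Set X) (hZne : Z.Nonempty) (x y : X)
    (hxy : dist x y ≤ Metric.infDist x Z)
    (γ : ℝ → X) (hγ : IsGeodesicFrom γ x y)
    (w : X) (hw : w ∈ γ '' Set.Icc (0 : ℝ) (dist x y)) :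
    dist w y ≤ Metric.infDist w Z ∧
      ∀ y' ∈ projSet Z y, ∀ Z' : Set X, Z' ⊆ Z → Z'.Nonempty →
        Metric.infDist y' Z' ≤ 4 * Metric.infDist w Z' := by
  obtain ⟨t, ht, rfl⟩ := hw
  obtain ⟨h0, hd, hiso⟩ := hγ
  have hD : (0 : ℝ) ≤ dist x y := dist_nonneg
  have hxw : dist x (γ t) = t := by
    have := hiso 0 ⟨le_refl 0, hD⟩ t ht
    rw [h0] at this
    rw [this, abs_sub_comm, sub_zero, abs_of_nonneg ht.1]
  have hwy : dist (γ t) y = dist x y - t := by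
    have := hiso t ht (dist x y) ⟨hD, le_refl _⟩
    rw [hd] at this
    rw [this, abs_of_nonpos (by linarith [ht.2])]
    ring
  -- Claim 1
  have h1 : dist (γ t) y ≤ Metric.infDist (γ t) Z := by
    by_contra hcon
    push_neg at hcon
    obtain ⟨z, hz, hzlt⟩ := (Metric.infDist_lt_iff hZne).1 hcon
    have hxZ : Metric.infDist x Z ≤ dist x z := Metric.infDist_le_dist_of_mem hz
    have htri : dist x z ≤ dist x (γ t) + dist (γ t) z := dist_triangle _ _ _
    rw [hxw] at htri
    rw [hwy] at hzlt
    linarith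
  refine ⟨h1, fun y' hy' Z' hZ'sub hZ'ne => ?_⟩
  have hkey : ∀ z' ∈ Z', Metric.infDist y' Z' ≤ 4 * dist (γ t) z' := by
    intro z' hz'
    have hz'Z : z' ∈ Z := hZ'sub hz'
    have hy'y : dist y y' = Metric.infDist y Z := hy'.2
    have hyZ : Metric.infDist y Z ≤ dist y z' := Metric.infDist_le_dist_of_mem hz'Z
    have hwZ : dist (γ t) y ≤ dist (γ t) z' := by
      calc dist (γ t) y ≤ Metric.infDist (γ t) Z := h1
        _ ≤ dist (γ t) z' := Metric.infDist_le_dist_of_mem hz'Z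
    have hyz' : dist y z' ≤ dist y (γ t) + dist (γ t) z' := dist_triangle _ _ _
    have : Metric.infDist y' Z' ≤ dist y' z' := Metric.infDist_le_dist_of_mem hz'
    have h2 : dist y' z' ≤ dist y' y + dist y z' := dist_triangle _ _ _
    have := dist_comm y y'
    have := dist_comm y (γ t)
    linarith
  have : Metric.infDist y' Z' / 4 ≤ Metric.infDist (γ t) Z' := by
    by_contra hcon
    push_neg at hcon
    obtain ⟨z', hz', hzlt⟩ := (Metric.infDist_lt_iff hZ'ne).1 hcon
    linarith [hkey z' hz']
  linarith
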